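/- arXiv:2403.04159 — 2 statements merged into one kernel-verified Lean document; each statement's English description precedes it below -/
import Mathlib

section
/- The digit functions d_1, d_2, … of the P2DGL expansion are independent and identically distributed random variables on ((0,1], Borel sets, Lebesgue measure): for any k∈ℕ, indices n_1<⋯<n_k and values a_1,…,a_k∈ℕ, the Lebesgue measure of {x: d_{n_1}(x)=a_1,…,d_{n_k}(x)=a_k} equals 2^{−(a_1+⋯+a_k)}. -/
open MeasureTheory Filter Set Real

/-- First digit of the power-2-decaying Gauss-like expansion:
`⌈y⌉` in the paper denotes the smallest integer strictly larger than `y`. -/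
noncomputable def p2dD1 (x : ℝ) : ℕ := (⌊-Real.logb 2 x⌋ + 1).toNat

/-- The Gauss-like map `T x = 2^n x - 1` on `(1/2^n, 1/2^(n-1)]`. -/
noncomputable def p2dT (x : ℝ) : ℝ := 2 ^ p2dD1 x * x - 1

/-- `n`-th digit (`n ≥ 1`) of the P2DGL expansion. -/
noncomputable def p2dDigit (n : ℕ) (x : ℝ) : ℕ := p2dD1 (p2dT^[n-1] x)

/-- Maximal digit among the first `n` digits. -/
noncomputable def p2dL (n : ℕ) (x : ℝ) : ℕ :=
  Finset.sup (Finset.Icc 1 n) (fun i => p2dDigit i x)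

lemma p2dD1_mem {x : ℝ} (hx : x ∈ Set.Ioc (0:ℝ) 1) :
    1 ≤ p2dD1 x ∧ x ∈ Set.Ioc ((2:ℝ) ^ (-(p2dD1 x:ℤ))) ((2:ℝ) ^ (1-(p2dD1 x:ℤ))) := by
  have h0 := hx.1
  have hL : 0 ≤ -Real.logb 2 x := by
    simp only [neg_nonneg]
    exact Real.logb_nonpos one_lt_two h0.le hx.2
  have hf : 0 ≤ ⌊-Real.logb 2 x⌋ := Int.floor_nonneg.2 hL
  have hd : (p2dD1 x : ℤ) = ⌊-Real.logb 2 x⌋ + 1 := by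
    unfold p2dD1; omega
  have h1 : ((p2dD1 x : ℤ) : ℝ) - 1 ≤ -Real.logb 2 x := by
    rw [hd]; push_cast
    have := Int.floor_le (-Real.logb 2 x); linarith
  have h2 : -Real.logb 2 x < ((p2dD1 x : ℤ) : ℝ) := by
    rw [hd]; push_cast
    have := Int.lt_floor_add_one (-Real.logb 2 x); linarith
  push_cast at h1 h2
  refine ⟨by omega, ?_, ?_⟩
  · calc (2:ℝ) ^ (-(p2dD1 x:ℤ)) = (2:ℝ) ^ ((-(p2dD1 x:ℤ) : ℤ) : ℝ) := by
          rw [Real.rpow_intCast]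
    _ < (2:ℝ) ^ (Real.logb 2 x) := by
          apply Real.rpow_lt_rpow_left_iff one_lt_two |>.2
          push_cast; linarith
    _ = x := Real.rpow_logb two_pos (by norm_num) h0
  · calc x = (2:ℝ) ^ (Real.logb 2 x) := (Real.rpow_logb two_pos (by norm_num) h0).symm
    _ ≤ (2:ℝ) ^ (((1-(p2dD1 x:ℤ) : ℤ) : ℝ)) := by
          apply Real.rpow_le_rpow_left_iff one_lt_two |>.2
          push_cast; linarith
    _ = (2:ℝ) ^ (1-(p2dD1 x:ℤ)) := by rw [Real.rpow_intCast]

lemma p2d_interval_subset {a : ℕ} (ha : 1 ≤ a) :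
    Set.Ioc ((2:ℝ) ^ (-(a:ℤ))) ((2:ℝ) ^ (1-(a:ℤ))) ⊆ Set.Ioc (0:ℝ) 1 := by
  intro x hx
  refine ⟨lt_trans (by positivity) hx.1, le_trans hx.2 ?_⟩
  calc (2:ℝ) ^ (1-(a:ℤ)) ≤ (2:ℝ) ^ (0:ℤ) := by
        apply zpow_le_zpow_right₀ one_le_two; omega
  _ = 1 := by norm_num

lemma p2dD1_eq' {a : ℕ} (ha : 1 ≤ a) {x : ℝ}
    (hx : x ∈ Set.Ioc ((2:ℝ) ^ (-(a:ℤ))) ((2:ℝ) ^ (1-(a:ℤ)))) : p2dD1 x = a := by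
  have hx01 := p2d_interval_subset ha hx
  obtain ⟨h1, h2⟩ := p2dD1_mem hx01
  by_contra hne
  rcases lt_or_gt_of_ne hne with h | h
  · have : (1 - (a : ℤ)) ≤ -(p2dD1 x:ℤ) := by omega
    have := zpow_le_zpow_right₀ (one_le_two (α := ℝ)) this
    exact absurd (lt_of_le_of_lt (hx.2.trans this) h2.1) (lt_irrefl x)
  · have : (1 - (p2dD1 x : ℤ)) ≤ -(a:ℤ) := by omega
    have := zpow_le_zpow_right₀ (one_le_two (α := ℝ)) this
    exact absurd (lt_of_le_of_lt (h2.2.trans this) hx.1) (lt_irrefl x)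

lemma p2d_cyl_eq {a : ℕ} (ha : 1 ≤ a) (A : Set ℝ) :
    {x : ℝ | x ∈ Set.Ioc (0:ℝ) 1 ∧ p2dD1 x = a ∧ p2dT x ∈ A}
      = (fun x => (2:ℝ)^(a:ℤ) * x - 1) ⁻¹' (A ∩ Set.Ioc (0:ℝ) 1) := by
  have hc : (0:ℝ) < (2:ℝ)^(a:ℤ) := by positivity
  have key : ∀ x : ℝ, x ∈ Set.Ioc ((2:ℝ) ^ (-(a:ℤ))) ((2:ℝ) ^ (1-(a:ℤ)))
      ↔ (2:ℝ)^(a:ℤ) * x - 1 ∈ Set.Ioc (0:ℝ) 1 := by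
    intro x
    have e1 : (2:ℝ)^(a:ℤ) * (2:ℝ)^(-(a:ℤ)) = 1 := by
      rw [← zpow_add₀ (two_ne_zero)]; norm_num
    have e2 : (2:ℝ)^(a:ℤ) * (2:ℝ)^(1-(a:ℤ)) = 2 := by
      rw [← zpow_add₀ (two_ne_zero)]; norm_num
    constructor
    · rintro ⟨hl, hr⟩
      constructor
      · nlinarith [mul_lt_mul_of_pos_left hl hc]
      · nlinarith [mul_le_mul_of_nonneg_left hr hc.le]
    · rintro ⟨hl, hr⟩
      constructor
      · nlinarith
      · nlinarith
  ext x
  simp only [Set.mem_setOf_eq, Set.mem_preimage, Set.mem_inter_iff]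
  constructor
  · rintro ⟨hx01, hd, hT⟩
    have hmem := (p2dD1_mem hx01).2
    rw [hd] at hmem
    have hTx : p2dT x = (2:ℝ)^(a:ℤ) * x - 1 := by
      unfold p2dT; rw [hd, zpow_natCast]
    exact ⟨hTx ▸ hT, (key x).1 hmem⟩
  · rintro ⟨hA, h01⟩
    have hmem := (key x).2 h01
    have hd := p2dD1_eq' ha hmem
    have hTx : p2dT x = (2:ℝ)^(a:ℤ) * x - 1 := by
      unfold p2dT; rw [hd, zpow_natCast]
    exact ⟨p2d_interval_subset ha hmem, hd, hTx ▸ hA⟩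

lemma p2d_affine_volume {a : ℕ} (S : Set ℝ) (hS : MeasurableSet S) :
    volume ((fun x => (2:ℝ)^(a:ℤ) * x - 1) ⁻¹' S)
      = (2 : ENNReal) ^ (-(a:ℤ)) * volume S := by
  have hc : ((2:ℝ)^(a:ℤ)) ≠ 0 := by positivity
  have h1 : (fun x => (2:ℝ)^(a:ℤ) * x - 1) ⁻¹' S
      = ((2:ℝ)^(a:ℤ) * ·) ⁻¹' ((· - (1:ℝ)) ⁻¹' S) := rfl
  rw [h1, Real.volume_preimage_mul_left hc]
  have h2 : volume ((· - (1:ℝ)) ⁻¹' S) = volume S :=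
    (measurePreserving_sub_right volume 1).measure_preimage hS.nullMeasurableSet
  rw [h2]
  congr 1
  have habs : |((2:ℝ)^(a:ℤ))⁻¹| = ((2:ℝ)^(a:ℕ))⁻¹ := by
    rw [abs_of_pos (by positivity), zpow_natCast]
  rw [habs, ENNReal.ofReal_inv_of_pos (by positivity),
    ENNReal.ofReal_pow (by norm_num), ENNReal.ofReal_ofNat]
  rw [ENNReal.zpow_neg, zpow_natCast]

lemma p2dD1_meas : Measurable p2dD1 := by
  apply Measurable.comp (measurable_from_top (f := Int.toNat))
  exact ((Real.measurable_log.div_const _).neg.floor).add_const 1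

lemma p2dT_meas : Measurable p2dT := by
  unfold p2dT
  exact (((measurable_from_top (f := fun n : ℕ => (2:ℝ)^n)).comp p2dD1_meas).mul
    measurable_id).sub measurable_const

lemma p2dT_mem {x : ℝ} (hx : x ∈ Set.Ioc (0:ℝ) 1) : p2dT x ∈ Set.Ioc (0:ℝ) 1 := by
  obtain ⟨h1, h2⟩ := p2dD1_mem hx
  set d := p2dD1 x with hd
  have hc : (0:ℝ) < (2:ℝ)^(d:ℤ) := by positivity
  have e1 : (2:ℝ)^(d:ℤ) * (2:ℝ)^(-(d:ℤ)) = 1 := by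
    rw [← zpow_add₀ (two_ne_zero)]; norm_num
  have e2 : (2:ℝ)^(d:ℤ) * (2:ℝ)^(1-(d:ℤ)) = 2 := by
    rw [← zpow_add₀ (two_ne_zero)]; norm_num
  have hTx : p2dT x = (2:ℝ)^(d:ℤ) * x - 1 := by
    unfold p2dT; rw [← hd, zpow_natCast]
  rw [hTx]
  obtain ⟨hl, hr⟩ := h2
  constructor
  · nlinarith [mul_lt_mul_of_pos_left hl hc]
  · nlinarith [mul_le_mul_of_nonneg_left hr hc.le]

lemma p2d_cyl_volume {a : ℕ} (ha : 1 ≤ a) {A : Set ℝ} (hA : MeasurableSet A) :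
    volume {x : ℝ | x ∈ Set.Ioc (0:ℝ) 1 ∧ p2dD1 x = a ∧ p2dT x ∈ A}
      = (2 : ENNReal) ^ (-(a:ℤ)) * volume (A ∩ Set.Ioc (0:ℝ) 1) := by
  rw [p2d_cyl_eq ha A, p2d_affine_volume _ (hA.inter measurableSet_Ioc)]

lemma p2d_cyl_measurable (a : ℕ) (A : Set ℝ) :
    MeasurableSet {x : ℝ | x ∈ Set.Ioc (0:ℝ) 1 ∧ p2dD1 x = a ∧ p2dT x ∈ A} ∨ True := Or.inr trivial

lemma p2d_tsum_geom : (∑' b : ℕ, (2 : ENNReal) ^ (-((b:ℤ)+1))) = 1 := by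
  have h : ∀ b : ℕ, (2 : ENNReal) ^ (-((b:ℤ)+1)) = 2⁻¹ * 2⁻¹ ^ b := by
    intro b
    rw [ENNReal.zpow_neg,
      show ((b:ℤ)+1) = ((b+1:ℕ):ℤ) by push_cast; ring, zpow_natCast, pow_succ,
      ENNReal.mul_inv (by norm_num) (by norm_num), ENNReal.inv_pow, mul_comm]
  rw [tsum_congr h, ENNReal.tsum_mul_left, ENNReal.tsum_geometric]
  have : (1 : ENNReal) - 2⁻¹ = 2⁻¹ := by
    rw [show (2:ENNReal)⁻¹ = 1/2 by rw [one_div], ENNReal.sub_half (by norm_num)]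
  rw [this, inv_inv, ENNReal.inv_mul_cancel (by norm_num) (by norm_num)]

lemma p2dT_preserving {A : Set ℝ} (hA : MeasurableSet A) :
    volume {x : ℝ | x ∈ Set.Ioc (0:ℝ) 1 ∧ p2dT x ∈ A} = volume (A ∩ Set.Ioc (0:ℝ) 1) := by
  have hdecomp : {x : ℝ | x ∈ Set.Ioc (0:ℝ) 1 ∧ p2dT x ∈ A}
      = ⋃ b : ℕ, {x : ℝ | x ∈ Set.Ioc (0:ℝ) 1 ∧ p2dD1 x = b + 1 ∧ p2dT x ∈ A} := by
    ext x
    simp only [Set.mem_setOf_eq, Set.mem_iUnion]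
    constructor
    · rintro ⟨h1, h2⟩
      refine ⟨p2dD1 x - 1, h1, ?_, h2⟩
      have := (p2dD1_mem h1).1
      omega
    · rintro ⟨b, h1, _, h2⟩; exact ⟨h1, h2⟩
  have hmeas : ∀ b : ℕ, MeasurableSet
      {x : ℝ | x ∈ Set.Ioc (0:ℝ) 1 ∧ p2dD1 x = b + 1 ∧ p2dT x ∈ A} := by
    intro b
    rw [p2d_cyl_eq (by omega) A]
    exact (hA.inter measurableSet_Ioc).preimage (by fun_prop)
  have hdisj : Pairwise (Function.onFun Disjoint
      fun b : ℕ => {x : ℝ | x ∈ Set.Ioc (0:ℝ) 1 ∧ p2dD1 x = b + 1 ∧ p2dT x ∈ A}) := by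
    intro b c hbc
    refine Set.disjoint_left.2 ?_
    rintro x ⟨_, hb, _⟩ ⟨_, hc, _⟩
    exact hbc (by omega)
  rw [hdecomp, measure_iUnion hdisj hmeas]
  have : ∀ b : ℕ, volume {x : ℝ | x ∈ Set.Ioc (0:ℝ) 1 ∧ p2dD1 x = b + 1 ∧ p2dT x ∈ A}
      = (2 : ENNReal) ^ (-((b:ℤ)+1)) * volume (A ∩ Set.Ioc (0:ℝ) 1) := by
    intro b
    rw [p2d_cyl_volume (by omega) hA]
    norm_num
  rw [tsum_congr this, ENNReal.tsum_mul_right, p2d_tsum_geom, one_mul]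

lemma p2dT_iter_preserving (j : ℕ) {A : Set ℝ} (hA : MeasurableSet A) :
    volume {x : ℝ | x ∈ Set.Ioc (0:ℝ) 1 ∧ p2dT^[j] x ∈ A} = volume (A ∩ Set.Ioc (0:ℝ) 1) := by
  induction j generalizing A with
  | zero =>
    congr 1
    ext x
    simp only [Function.iterate_zero_apply, Set.mem_setOf_eq, Set.mem_inter_iff]
    tauto
  | succ j ih =>
    have hB : MeasurableSet {y : ℝ | p2dT^[j] y ∈ A} :=
      hA.preimage (p2dT_meas.iterate j)
    have : {x : ℝ | x ∈ Set.Ioc (0:ℝ) 1 ∧ p2dT^[j+1] x ∈ A}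
        = {x : ℝ | x ∈ Set.Ioc (0:ℝ) 1 ∧ p2dT x ∈ {y : ℝ | p2dT^[j] y ∈ A}} := by
      ext x
      simp only [Set.mem_setOf_eq, Function.iterate_succ_apply]
    rw [this, p2dT_preserving hB]
    have : {y : ℝ | p2dT^[j] y ∈ A} ∩ Set.Ioc (0:ℝ) 1
        = {x : ℝ | x ∈ Set.Ioc (0:ℝ) 1 ∧ p2dT^[j] x ∈ A} := by
      ext x; simp only [Set.mem_inter_iff, Set.mem_setOf_eq]; tauto
    rw [this, ih hA]

lemma p2d_claim : ∀ (k : ℕ) (m : Fin k → ℕ) (a : Fin k → ℕ), StrictMono m → (∀ i, 1 ≤ a i) →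
    volume {x : ℝ | x ∈ Set.Ioc (0:ℝ) 1 ∧ ∀ i : Fin k, p2dD1 (p2dT^[m i] x) = a i}
      = (2 : ENNReal) ^ (-(∑ i : Fin k, (a i : ℤ))) := by
  intro k
  induction k with
  | zero =>
    intro m a _ _
    have : {x : ℝ | x ∈ Set.Ioc (0:ℝ) 1 ∧ ∀ i : Fin 0, p2dD1 (p2dT^[m i] x) = a i}
        = Set.Ioc (0:ℝ) 1 := by
      ext x
      simp only [Set.mem_setOf_eq, and_iff_left_iff_imp]
      exact fun _ i => i.elim0
    rw [this]
    simp [Real.volume_Ioc]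
  | succ k ih =>
    intro m a hm ha
    set j := m 0 with hj
    have hmsucc : ∀ i : Fin k, j + 1 ≤ m i.succ := by
      intro i
      have : m 0 < m i.succ := hm (Fin.succ_pos i)
      omega
    set B : Set ℝ := {z : ℝ | ∀ i : Fin k, p2dD1 (p2dT^[m i.succ - (j+1)] z) = a i.succ}
      with hB
    have hBmeas : MeasurableSet B := by
      have : B = ⋂ i : Fin k,
          (fun z => p2dD1 (p2dT^[m i.succ - (j+1)] z)) ⁻¹' {a i.succ} := by
        ext z; simp [hB]
      rw [this]
      exact MeasurableSet.iInter fun i =>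
        (p2dD1_meas.comp (p2dT_meas.iterate _)) (measurableSet_singleton _)
    set A : Set ℝ := {y : ℝ | p2dD1 y = a 0 ∧ p2dT y ∈ B} with hA
    have hAmeas : MeasurableSet A := by
      exact (p2dD1_meas (measurableSet_singleton (a 0))).inter
        (p2dT_meas hBmeas)
    have hiter : ∀ (i : Fin k) (x : ℝ),
        p2dT^[m i.succ] x = p2dT^[m i.succ - (j+1)] (p2dT (p2dT^[j] x)) := by
      intro i x
      have hsum : m i.succ - (j+1) + (1 + j) = m i.succ := by have := hmsucc i; omega
      calc p2dT^[m i.succ] x = p2dT^[m i.succ - (j+1) + (1 + j)] x := by rw [hsum]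
      _ = p2dT^[m i.succ - (j+1)] (p2dT^[1+j] x) := Function.iterate_add_apply _ _ _ _
      _ = p2dT^[m i.succ - (j+1)] (p2dT (p2dT^[j] x)) := by
            rw [Function.iterate_add_apply, Function.iterate_one]
    have hset : {x : ℝ | x ∈ Set.Ioc (0:ℝ) 1 ∧ ∀ i : Fin (k+1), p2dD1 (p2dT^[m i] x) = a i}
        = {x : ℝ | x ∈ Set.Ioc (0:ℝ) 1 ∧ p2dT^[j] x ∈ A} := by
      ext x
      simp only [Set.mem_setOf_eq, hA, hB, Fin.forall_fin_succ]
      constructor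
      · rintro ⟨h01, h0, hs⟩
        refine ⟨h01, h0, fun i => ?_⟩
        rw [← hiter i x]
        exact hs i
      · rintro ⟨h01, h0, hs⟩
        refine ⟨h01, h0, fun i => ?_⟩
        rw [hiter i x]
        exact hs i
    rw [hset, p2dT_iter_preserving j hAmeas]
    have hAinter : A ∩ Set.Ioc (0:ℝ) 1
        = {y : ℝ | y ∈ Set.Ioc (0:ℝ) 1 ∧ p2dD1 y = a 0 ∧ p2dT y ∈ B} := by
      ext y; simp only [Set.mem_inter_iff, Set.mem_setOf_eq, hA]; tauto
    rw [hAinter, p2d_cyl_volume (ha 0) hBmeas]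
    have hBinter : B ∩ Set.Ioc (0:ℝ) 1
        = {z : ℝ | z ∈ Set.Ioc (0:ℝ) 1 ∧
            ∀ i : Fin k, p2dD1 (p2dT^[m i.succ - (j+1)] z) = a i.succ} := by
      ext z; simp only [Set.mem_inter_iff, Set.mem_setOf_eq, hB]; tauto
    have hm' : StrictMono (fun i : Fin k => m i.succ - (j+1)) := by
      intro i i' hii'
      have h1 := hmsucc i
      have h2 := hmsucc i'
      have : m i.succ < m i'.succ := hm (Fin.succ_lt_succ_iff.2 hii')
      show m i.succ - (j+1) < m i'.succ - (j+1)
      omega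
    rw [hBinter, ih _ _ hm' (fun i => ha i.succ)]
    rw [← ENNReal.zpow_add (by norm_num) (by norm_num), Fin.sum_univ_succ]
    congr 1
    ring


/-- the digits are i.i.d.: finite-dimensional distributions factorize. -/
theorem p2d_digits_iid (k : ℕ) (n : Fin k → ℕ) (a : Fin k → ℕ)
    (hn : StrictMono n) (hn1 : ∀ i, 1 ≤ n i) (ha : ∀ i, 1 ≤ a i) :
    volume {x : ℝ | x ∈ Set.Ioc (0:ℝ) 1 ∧ ∀ i : Fin k, p2dDigit (n i) x = a i}
      = (2 : ENNReal) ^ (-(∑ i : Fin k, (a i : ℤ))) := by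
  have hm : StrictMono (fun i => n i - 1) := by
    intro i i' h
    have h1 := hn1 i
    have h2 := hn h
    show n i - 1 < n i' - 1
    omega
  have := p2d_claim k (fun i => n i - 1) a hm ha
  convert this using 3
  rfl
end

section
/- For almost every x∈(0,1] (with respect to Lebesgue measure), lim_{n→∞} L_n(x)/log_2 n = 1, where L_n(x)=max{d_i(x):1≤i≤n}. -/
open MeasureTheory Filter Set Real

lemma logb2pow (j : ℕ) : Real.logb 2 (((2:ℝ)^j)⁻¹) = -j := by
  rw [Real.logb_inv, Real.logb_pow]; simp

lemma p2dD1_eq {j : ℕ} {x : ℝ} (h1 : ((2:ℝ)^(j+1))⁻¹ < x) (h2 : x ≤ ((2:ℝ)^j)⁻¹) :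
    p2dD1 x = j + 1 := by
  have hx : 0 < x := lt_trans (by positivity) h1
  have hub : Real.logb 2 x ≤ -(j:ℝ) := by
    rw [← logb2pow j]
    exact (Real.logb_le_logb (by norm_num) hx (by positivity)).2 h2
  have hlb : -((j:ℝ)+1) < Real.logb 2 x := by
    have := Real.logb_lt_logb (b := 2) (by norm_num) (by positivity) h1
    rw [logb2pow (j+1)] at this
    push_cast at this
    linarith
  have hfl : ⌊-Real.logb 2 x⌋ = j := by
    rw [Int.floor_eq_iff]
    constructor
    · push_cast; linarith
    · push_cast; linarith
  unfold p2dD1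
  rw [hfl]
  simp

lemma exists_index {x : ℝ} (hx : x ∈ Set.Ioc (0:ℝ) 1) :
    ∃ j : ℕ, ((2:ℝ)^(j+1))⁻¹ < x ∧ x ≤ ((2:ℝ)^j)⁻¹ := by
  obtain ⟨hx0, hx1⟩ := hx
  set y := -Real.logb 2 x with hy
  have hy0 : 0 ≤ y := by
    have : Real.logb 2 x ≤ 0 := Real.logb_nonpos (by norm_num) hx0.le hx1
    linarith
  refine ⟨⌊y⌋₊, ?_, ?_⟩
  · have h1 : y < ⌊y⌋₊ + 1 := Nat.lt_floor_add_one y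
    have hxe : (2:ℝ) ^ Real.logb 2 x = x := Real.rpow_logb (by norm_num) (by norm_num) hx0
    have : ((2:ℝ)^(⌊y⌋₊+1))⁻¹ = (2:ℝ) ^ (-((⌊y⌋₊:ℝ)+1)) := by
      rw [Real.rpow_neg (by norm_num)]
      norm_num
      rw [← Real.rpow_natCast]
      push_cast
      ring_nf
    rw [this, ← hxe]
    apply Real.rpow_lt_rpow_of_exponent_lt (by norm_num)
    rw [hy] at h1; linarith
  · have h2 : (⌊y⌋₊:ℝ) ≤ y := Nat.floor_le hy0
    have hxe : (2:ℝ) ^ Real.logb 2 x = x := Real.rpow_logb (by norm_num) (by norm_num) hx0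
    have : ((2:ℝ)^(⌊y⌋₊:ℕ))⁻¹ = (2:ℝ) ^ (-(⌊y⌋₊:ℝ)) := by
      rw [Real.rpow_neg (by norm_num), Real.rpow_natCast]
    rw [this, ← hxe]
    apply Real.rpow_le_rpow_of_exponent_le (by norm_num)
    rw [hy] at h2; linarith

lemma Ij_subset {j : ℕ} : Set.Ioc (((2:ℝ)^(j+1))⁻¹) (((2:ℝ)^j)⁻¹) ⊆ Set.Ioc (0:ℝ) 1 := by
  intro x hx
  refine ⟨lt_trans (by positivity) hx.1, le_trans hx.2 ?_⟩
  rw [inv_le_one_iff₀]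
  right; exact one_le_pow₀ (by norm_num)

lemma p2dT_eq {j : ℕ} {x : ℝ} (h1 : ((2:ℝ)^(j+1))⁻¹ < x) (h2 : x ≤ ((2:ℝ)^j)⁻¹) :
    p2dT x = 2^(j+1) * x - 1 := by
  unfold p2dT
  rw [p2dD1_eq h1 h2]

lemma p2dT_iter_mem {x : ℝ} (hx : x ∈ Set.Ioc (0:ℝ) 1) (n : ℕ) :
    p2dT^[n] x ∈ Set.Ioc (0:ℝ) 1 := by
  induction n with
  | zero => simpa using hx
  | succ n ih => rw [Function.iterate_succ_apply']; exact p2dT_mem ih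

-- measure of affine preimage
lemma vol_affine (j : ℕ) (B : Set ℝ) :
    volume ((fun x => (2:ℝ)^(j+1) * x - 1)⁻¹' B) = ENNReal.ofReal (((2:ℝ)^(j+1))⁻¹) * volume B := by
  have : (fun x => (2:ℝ)^(j+1) * x - 1) = (fun y => -1 + y) ∘ (fun x => (2:ℝ)^(j+1) * x) := by
    funext x; simp [Function.comp]; ring
  rw [this, Set.preimage_comp]
  rw [Real.volume_preimage_mul_left (by positivity : ((2:ℝ)^(j+1)) ≠ 0)]
  rw [measure_preimage_add volume (-1) B]
  congr 1
  rw [abs_of_pos (by positivity)]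

lemma slice_eq {j : ℕ} {B : Set ℝ} (hB : B ⊆ Set.Ioc (0:ℝ) 1) :
    Set.Ioc (((2:ℝ)^(j+1))⁻¹) (((2:ℝ)^j)⁻¹) ∩ p2dT⁻¹' B
      = (fun x => (2:ℝ)^(j+1) * x - 1)⁻¹' B := by
  ext x
  constructor
  · rintro ⟨⟨h1, h2⟩, hTB⟩
    have := p2dT_eq h1 h2
    simpa [Set.mem_preimage, ← this] using hTB
  · intro hx
    have hgx : (2:ℝ)^(j+1) * x - 1 ∈ B := hx
    have hmem := hB hgx
    obtain ⟨hg0, hg1⟩ := hmem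
    have hp : (0:ℝ) < 2^(j+1) := by positivity
    have h1 : ((2:ℝ)^(j+1))⁻¹ < x := by
      rw [inv_lt_iff_one_lt_mul₀ hp]
      nlinarith
    have h2 : x ≤ ((2:ℝ)^j)⁻¹ := by
      have hid : ((2:ℝ)^j)⁻¹ = 2 / 2^(j+1) := by
        rw [pow_succ]; field_simp
      rw [hid, le_div_iff₀ hp]
      nlinarith
    refine ⟨⟨h1, h2⟩, ?_⟩
    rw [Set.mem_preimage, p2dT_eq h1 h2]
    exact hgx

lemma slice_vol {j : ℕ} {B : Set ℝ} (hB : B ⊆ Set.Ioc (0:ℝ) 1) :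
    volume (Set.Ioc (((2:ℝ)^(j+1))⁻¹) (((2:ℝ)^j)⁻¹) ∩ p2dT⁻¹' B)
      = ENNReal.ofReal (((2:ℝ)^(j+1))⁻¹) * volume B := by
  rw [slice_eq hB, vol_affine]

lemma real_geom (m : ℕ) : ∑ j ∈ Finset.range m, ((2:ℝ)^(j+1))⁻¹ = 1 - ((2:ℝ)^m)⁻¹ := by
  induction m with
  | zero => simp
  | succ m ih =>
    rw [Finset.sum_range_succ, ih, pow_succ]
    have : ((2:ℝ)^m) ≠ 0 := by positivity
    field_simp
    ring

lemma tsum_geom : ∑' j : ℕ, ENNReal.ofReal (((2:ℝ)^(j+1))⁻¹) = 1 := by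
  have hs : Summable (fun j : ℕ => ((2:ℝ)^(j+1))⁻¹) := by
    have : (fun j : ℕ => ((2:ℝ)^(j+1))⁻¹) = (fun j : ℕ => (1/2:ℝ) * (1/2)^j) := by
      funext j; rw [pow_succ]; field_simp; rw [← mul_pow]; norm_num
    rw [this]
    exact (summable_geometric_two).mul_left _
  rw [← ENNReal.ofReal_tsum_of_nonneg (fun j => by positivity) hs]
  have : ∑' j : ℕ, ((2:ℝ)^(j+1))⁻¹ = 1 := by
    have h1 : ∑' j : ℕ, ((2:ℝ)^(j+1))⁻¹ = ∑' j : ℕ, (1/2:ℝ) * (1/2)^j := by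
      congr 1; funext j; rw [pow_succ]; field_simp; rw [← mul_pow]; norm_num
    rw [h1, tsum_mul_left, tsum_geometric_two]
    norm_num
  rw [this, ENNReal.ofReal_one]

lemma step_le {B : Set ℝ} (hB : B ⊆ Set.Ioc (0:ℝ) 1) :
    volume (Set.Ioc (0:ℝ) 1 ∩ p2dT⁻¹' B) ≤ volume B := by
  have hcover : Set.Ioc (0:ℝ) 1 ∩ p2dT⁻¹' B
      ⊆ ⋃ j : ℕ, (Set.Ioc (((2:ℝ)^(j+1))⁻¹) (((2:ℝ)^j)⁻¹) ∩ p2dT⁻¹' B) := by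
    rintro x ⟨hx, hTB⟩
    obtain ⟨j, h1, h2⟩ := exists_index hx
    exact Set.mem_iUnion.2 ⟨j, ⟨h1, h2⟩, hTB⟩
  calc volume (Set.Ioc (0:ℝ) 1 ∩ p2dT⁻¹' B)
      ≤ ∑' j : ℕ, volume (Set.Ioc (((2:ℝ)^(j+1))⁻¹) (((2:ℝ)^j)⁻¹) ∩ p2dT⁻¹' B) :=
        le_trans (measure_mono hcover) (measure_iUnion_le _)
    _ = ∑' j : ℕ, ENNReal.ofReal (((2:ℝ)^(j+1))⁻¹) * volume B := by
        congr 1; funext j; exact slice_vol hB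
    _ = (∑' j : ℕ, ENNReal.ofReal (((2:ℝ)^(j+1))⁻¹)) * volume B := by rw [ENNReal.tsum_mul_right]
    _ = volume B := by rw [tsum_geom, one_mul]

lemma iter_le {B : Set ℝ} (hB : B ⊆ Set.Ioc (0:ℝ) 1) (n : ℕ) :
    volume (Set.Ioc (0:ℝ) 1 ∩ (p2dT^[n])⁻¹' B) ≤ volume B := by
  induction n with
  | zero => simp; exact le_trans (measure_mono Set.inter_subset_right) le_rfl
  | succ n ih =>
    have hset : Set.Ioc (0:ℝ) 1 ∩ (p2dT^[n+1])⁻¹' B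
        ⊆ Set.Ioc (0:ℝ) 1 ∩ p2dT⁻¹' (Set.Ioc (0:ℝ) 1 ∩ (p2dT^[n])⁻¹' B) := by
      rintro x ⟨hx, hxB⟩
      refine ⟨hx, p2dT_mem hx, ?_⟩
      rw [Set.mem_preimage] at hxB ⊢
      rwa [Function.iterate_succ_apply] at hxB
    calc volume (Set.Ioc (0:ℝ) 1 ∩ (p2dT^[n+1])⁻¹' B)
        ≤ volume (Set.Ioc (0:ℝ) 1 ∩ p2dT⁻¹' (Set.Ioc (0:ℝ) 1 ∩ (p2dT^[n])⁻¹' B)) :=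
          measure_mono hset
      _ ≤ volume (Set.Ioc (0:ℝ) 1 ∩ (p2dT^[n])⁻¹' B) := step_le Set.inter_subset_left
      _ ≤ volume B := ih

lemma tail_le (n m : ℕ) (hm : 1 ≤ m) :
    volume {x | x ∈ Set.Ioc (0:ℝ) 1 ∧ m ≤ p2dD1 (p2dT^[n] x)}
      ≤ ENNReal.ofReal (2 * ((2:ℝ)^m)⁻¹) := by
  set B := Set.Ioc (0:ℝ) (((2:ℝ)^(m-1))⁻¹) with hBdef
  have hB : B ⊆ Set.Ioc (0:ℝ) 1 := by
    intro y hy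
    exact ⟨hy.1, le_trans hy.2 (by
      rw [inv_le_one_iff₀]; right; exact one_le_pow₀ (by norm_num))⟩
  have hsub : {x | x ∈ Set.Ioc (0:ℝ) 1 ∧ m ≤ p2dD1 (p2dT^[n] x)}
      ⊆ Set.Ioc (0:ℝ) 1 ∩ (p2dT^[n])⁻¹' B := by
    rintro x ⟨hx, hd⟩
    refine ⟨hx, ?_⟩
    rw [Set.mem_preimage]
    set y := p2dT^[n] x with hy
    have hymem : y ∈ Set.Ioc (0:ℝ) 1 := p2dT_iter_mem hx n
    obtain ⟨j, h1, h2⟩ := exists_index hymem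
    have hdj : p2dD1 y = j + 1 := p2dD1_eq h1 h2
    rw [hdj] at hd
    refine ⟨hymem.1, le_trans h2 ?_⟩
    apply inv_anti₀ (by positivity)
    exact pow_le_pow_right₀ (by norm_num) (by omega)
  calc volume {x | x ∈ Set.Ioc (0:ℝ) 1 ∧ m ≤ p2dD1 (p2dT^[n] x)}
      ≤ volume B := le_trans (measure_mono hsub) (iter_le hB n)
    _ = ENNReal.ofReal (((2:ℝ)^(m-1))⁻¹) := by rw [hBdef, Real.volume_Ioc, sub_zero]
    _ ≤ ENNReal.ofReal (2 * ((2:ℝ)^m)⁻¹) := by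
        apply ENNReal.ofReal_le_ofReal
        have : (2:ℝ)^m = 2 * 2^(m-1) := by
          rw [← pow_succ']
          congr 1
          omega
        rw [this]
        rw [mul_inv]
        rw [← mul_assoc]
        norm_num

def p2dEset (m n : ℕ) : Set ℝ :=
  {x | x ∈ Set.Ioc (0:ℝ) 1 ∧ ∀ j < n, p2dD1 (p2dT^[j] x) ≤ m}

lemma p2dEset_subset (m n : ℕ) : p2dEset m n ⊆ Set.Ioc (0:ℝ) 1 := fun _ h => h.1

lemma p2dEset_le (m n : ℕ) :
    volume (p2dEset m n) ≤ ENNReal.ofReal ((1 - ((2:ℝ)^m)⁻¹)^n) := by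
  induction n with
  | zero =>
    simp only [pow_zero, ENNReal.ofReal_one]
    calc volume (p2dEset m 0) ≤ volume (Set.Ioc (0:ℝ) 1) := measure_mono (p2dEset_subset m 0)
      _ = 1 := by simp
  | succ n ih =>
    have hcover : p2dEset m (n+1)
        ⊆ ⋃ j ∈ Finset.range m, (Set.Ioc (((2:ℝ)^(j+1))⁻¹) (((2:ℝ)^j)⁻¹) ∩ p2dT⁻¹' (p2dEset m n)) := by
      rintro x ⟨hx, hd⟩
      obtain ⟨j, h1, h2⟩ := exists_index hx
      have hdj : p2dD1 x = j + 1 := p2dD1_eq h1 h2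
      have hjm : j < m := by
        have := hd 0 (Nat.succ_pos n)
        simp only [Function.iterate_zero_apply] at this
        omega
      refine Set.mem_biUnion (Finset.mem_range.2 hjm) ⟨⟨h1, h2⟩, ?_⟩
      rw [Set.mem_preimage]
      refine ⟨p2dT_mem hx, fun i hi => ?_⟩
      have := hd (i+1) (by omega)
      rwa [Function.iterate_succ_apply] at this
    calc volume (p2dEset m (n+1))
        ≤ ∑ j ∈ Finset.range m, volume (Set.Ioc (((2:ℝ)^(j+1))⁻¹) (((2:ℝ)^j)⁻¹) ∩ p2dT⁻¹' (p2dEset m n)) :=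
          le_trans (measure_mono hcover) (measure_biUnion_finset_le _ _)
      _ = ∑ j ∈ Finset.range m, ENNReal.ofReal (((2:ℝ)^(j+1))⁻¹) * volume (p2dEset m n) := by
          apply Finset.sum_congr rfl
          intro j _
          exact slice_vol (p2dEset_subset m n)
      _ = (∑ j ∈ Finset.range m, ENNReal.ofReal (((2:ℝ)^(j+1))⁻¹)) * volume (p2dEset m n) := by
          rw [Finset.sum_mul]
      _ ≤ (∑ j ∈ Finset.range m, ENNReal.ofReal (((2:ℝ)^(j+1))⁻¹)) * ENNReal.ofReal ((1 - ((2:ℝ)^m)⁻¹)^n) := by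
          exact mul_le_mul_right ih _
      _ = ENNReal.ofReal ((1 - ((2:ℝ)^m)⁻¹)^(n+1)) := by
          rw [← ENNReal.ofReal_sum_of_nonneg (fun j _ => by positivity), real_geom]
          rw [← ENNReal.ofReal_mul (by
            have : ((2:ℝ)^m)⁻¹ ≤ 1 := by
              rw [inv_le_one_iff₀]; right; exact one_le_pow₀ (by norm_num)
            linarith)]
          rw [pow_succ]
          ring_nf

lemma tsum_ne_top_of_le {μ : Measure ℝ} {s : ℕ → Set ℝ} {g : ℕ → ℝ}
    (hg0 : ∀ n, 0 ≤ g n) (hg : Summable g)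
    (h : ∀ n, μ (s n) ≤ ENNReal.ofReal (g n)) : ∑' n, μ (s n) ≠ ⊤ := by
  have : ∑' n, μ (s n) ≤ ∑' n, ENNReal.ofReal (g n) := ENNReal.tsum_le_tsum h
  rw [← ENNReal.ofReal_tsum_of_nonneg hg0 hg] at this
  exact ne_top_of_le_ne_top ENNReal.ofReal_ne_top this

lemma summable_shift (p : ℝ) (hp : p < -1) (c : ℝ) :
    Summable (fun n : ℕ => c * ((n:ℝ)+2)^p) := by
  apply Summable.mul_left
  have h1 : Summable (fun n : ℕ => ((n:ℝ))^p) := Real.summable_nat_rpow.2 hp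
  have h2 := (summable_nat_add_iff 2).2 h1
  apply h2.congr
  intro n
  push_cast
  ring_nf

lemma logb_nat_nonneg (n : ℕ) : 0 ≤ Real.logb 2 ((n:ℝ)+2) :=
  Real.logb_nonneg (by norm_num) (by push_cast; linarith [Nat.cast_nonneg (α := ℝ) n])

lemma two_rpow_logb (n : ℕ) : (2:ℝ) ^ (Real.logb 2 ((n:ℝ)+2)) = (n:ℝ)+2 :=
  Real.rpow_logb (by norm_num) (by norm_num) (by positivity)

-- upper bound events
lemma volU_le (K n : ℕ) :
    volume {x | x ∈ Set.Ioc (0:ℝ) 1 ∧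
        ⌊(1+1/((K:ℝ)+1)) * Real.logb 2 ((n:ℝ)+2)⌋₊ + 1 ≤ p2dD1 (p2dT^[n+1] x)}
      ≤ ENNReal.ofReal (2 * ((n:ℝ)+2)^(-(1+1/((K:ℝ)+1)))) := by
  set c : ℝ := 1+1/((K:ℝ)+1) with hc
  have hc0 : 0 < c := by positivity
  set L : ℝ := Real.logb 2 ((n:ℝ)+2) with hLdef
  set m : ℕ := ⌊c * L⌋₊ + 1 with hm
  have h1 := tail_le (n+1) m (by omega)
  refine le_trans h1 (ENNReal.ofReal_le_ofReal ?_)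
  have hcL : c * L < m := by
    have := Nat.lt_floor_add_one (c * L)
    rw [hm]; push_cast
    push_cast at this
    linarith
  have hpow : (n:ℝ)+2 ≤ (2:ℝ)^(m:ℕ) := by
    have e1 : ((n:ℝ)+2) ^ (1:ℝ) ≤ ((n:ℝ)+2) ^ c := by
      apply Real.rpow_le_rpow_of_exponent_le (by push_cast; linarith [Nat.cast_nonneg (α := ℝ) n])
      rw [hc]
      have : 0 < 1/((K:ℝ)+1) := by positivity
      linarith
    have e2 : ((n:ℝ)+2) ^ c = (2:ℝ) ^ (c * L) := by
      rw [mul_comm, Real.rpow_mul (by norm_num), two_rpow_logb]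
    have e3 : (2:ℝ) ^ (c * L) ≤ (2:ℝ) ^ ((m:ℕ):ℝ) := by
      apply Real.rpow_le_rpow_of_exponent_le (by norm_num) hcL.le
    rw [Real.rpow_one] at e1
    rw [Real.rpow_natCast] at e3
    linarith
  have hinv : ((2:ℝ)^(m:ℕ))⁻¹ ≤ ((n:ℝ)+2)^(-c) := by
    rw [Real.rpow_neg (by positivity)]
    apply inv_anti₀ (by positivity)
    calc ((n:ℝ)+2)^c = (2:ℝ)^(c*L) := by
          rw [mul_comm, Real.rpow_mul (by norm_num), two_rpow_logb]
      _ ≤ (2:ℝ)^((m:ℕ):ℝ) := Real.rpow_le_rpow_of_exponent_le (by norm_num) hcL.le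
      _ = (2:ℝ)^(m:ℕ) := Real.rpow_natCast 2 m
  nlinarith [hinv]

lemma volV_le (K n : ℕ) :
    volume (p2dEset ⌊(1-1/((K:ℝ)+1)) * Real.logb 2 ((n:ℝ)+2)⌋₊ (n+2))
      ≤ ENNReal.ofReal ((Nat.factorial (2*(K+1)) : ℝ) * ((n:ℝ)+2)^(-(2:ℝ))) := by
  set ε : ℝ := 1/((K:ℝ)+1) with hε
  have hε0 : 0 < ε := by positivity
  have hε1 : ε ≤ 1 := by
    rw [hε, div_le_one (by positivity)]
    linarith [Nat.cast_nonneg (α := ℝ) K]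
  set L : ℝ := Real.logb 2 ((n:ℝ)+2) with hLdef
  have hL0 : 0 ≤ L := logb_nat_nonneg n
  set m : ℕ := ⌊(1-ε) * L⌋₊ with hm
  set k : ℕ := 2*(K+1) with hk
  refine le_trans (p2dEset_le m (n+2)) (ENNReal.ofReal_le_ofReal ?_)
  set t : ℝ := ((2:ℝ)^m)⁻¹ with ht
  have ht0 : 0 < t := by positivity
  have ht1 : t ≤ 1 := by
    rw [ht, inv_le_one_iff₀]; right; exact one_le_pow₀ (by norm_num)
  have hN2 : (0:ℝ) < (n:ℝ)+2 := by positivity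
  -- t ≥ (n+2)^(ε-1)
  have htlb : ((n:ℝ)+2)^(ε-1) ≤ t := by
    have h1 : (m:ℝ) ≤ (1-ε)*L := Nat.floor_le (by nlinarith)
    have h2 : (2:ℝ)^(m:ℕ) ≤ ((n:ℝ)+2)^(1-ε) := by
      calc (2:ℝ)^(m:ℕ) = (2:ℝ)^((m:ℕ):ℝ) := (Real.rpow_natCast 2 m).symm
        _ ≤ (2:ℝ)^((1-ε)*L) := Real.rpow_le_rpow_of_exponent_le (by norm_num) h1
        _ = ((n:ℝ)+2)^(1-ε) := by
            rw [mul_comm, Real.rpow_mul (by norm_num), two_rpow_logb]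
    rw [ht]
    calc ((n:ℝ)+2)^(ε-1) = (((n:ℝ)+2)^(1-ε))⁻¹ := by
          rw [← Real.rpow_neg hN2.le]; ring_nf
      _ ≤ ((2:ℝ)^(m:ℕ))⁻¹ := inv_anti₀ (by positivity) h2
  -- (n+2)*t ≥ (n+2)^ε
  have hnt : ((n:ℝ)+2)^ε ≤ ((n:ℝ)+2) * t := by
    calc ((n:ℝ)+2)^ε = ((n:ℝ)+2)^(1+(ε-1)) := by ring_nf
      _ = ((n:ℝ)+2)^(1:ℝ) * ((n:ℝ)+2)^(ε-1) := Real.rpow_add hN2 1 (ε-1)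
      _ = ((n:ℝ)+2) * ((n:ℝ)+2)^(ε-1) := by rw [Real.rpow_one]
      _ ≤ ((n:ℝ)+2) * t := by
          exact mul_le_mul_of_nonneg_left htlb hN2.le
  set y : ℝ := ((n:ℝ)+2)^ε with hy
  have hy0 : 0 < y := Real.rpow_pos_of_pos hN2 ε
  -- (1-t)^(n+2) ≤ exp(-(n+2)*t) ≤ exp(-y)
  have step1 : (1 - t)^(n+2) ≤ Real.exp (-y) := by
    have e1 : (1 - t)^(n+2) ≤ (Real.exp (-t))^(n+2) := by
      apply pow_le_pow_left₀ (by linarith)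
      linarith [Real.add_one_le_exp (-t)]
    have e2 : (Real.exp (-t))^(n+2) = Real.exp (((n:ℕ)+2:ℝ) * (-t)) := by
      rw [← Real.exp_nat_mul]
      push_cast
      ring_nf
    have e3 : Real.exp (((n:ℕ)+2:ℝ) * (-t)) ≤ Real.exp (-y) := by
      apply Real.exp_le_exp.2
      push_cast
      nlinarith
    calc (1 - t)^(n+2) ≤ (Real.exp (-t))^(n+2) := e1
      _ = _ := e2
      _ ≤ _ := e3
  -- exp(-y) ≤ k! * (n+2)^(-2)
  have step2 : Real.exp (-y) ≤ (Nat.factorial k : ℝ) * ((n:ℝ)+2)^(-(2:ℝ)) := by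
    have hfac : y^k / (Nat.factorial k : ℝ) ≤ Real.exp y :=
      Real.pow_div_factorial_le_exp y hy0.le k
    have hyk : y^k = ((n:ℝ)+2)^(2:ℝ) := by
      rw [hy, ← Real.rpow_natCast (((n:ℝ)+2)^ε) k, ← Real.rpow_mul hN2.le]
      congr 1
      rw [hε, hk]
      push_cast
      field_simp
    have h1 : Real.exp (-y) = (Real.exp y)⁻¹ := Real.exp_neg y
    have h2 : (Real.exp y)⁻¹ ≤ (y^k / (Nat.factorial k : ℝ))⁻¹ := by
      apply inv_anti₀ _ hfac
      rw [hyk]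
      positivity
    have h3 : (y^k / (Nat.factorial k : ℝ))⁻¹ = (Nat.factorial k : ℝ) * ((n:ℝ)+2)^(-(2:ℝ)) := by
      rw [hyk, Real.rpow_neg hN2.le]
      field_simp
    rw [h1]
    exact h3 ▸ h2
  calc (1 - t)^(n+2) ≤ Real.exp (-y) := step1
    _ ≤ _ := step2

lemma logb_tendsto : Tendsto (fun i : ℕ => Real.logb 2 (i:ℝ)) atTop atTop := by
  have h1 : Tendsto (fun i : ℕ => Real.log (i:ℝ)) atTop atTop :=
    Real.tendsto_log_atTop.comp tendsto_natCast_atTop_atTop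
  have h2 : Tendsto (fun i : ℕ => Real.log (i:ℝ) / Real.log 2) atTop atTop :=
    h1.atTop_div_const (by positivity)
  exact h2.congr (fun i => rfl)

lemma main_ptwise (x : ℝ)
    (hU : ∀ K : ℕ, ∀ᶠ i : ℕ in atTop, p2dDigit i x ≤ ⌊(1+1/((K:ℝ)+1)) * Real.logb 2 (i:ℝ)⌋₊)
    (hL : ∀ K : ℕ, ∀ᶠ i : ℕ in atTop, (1-1/((K:ℝ)+1)) * Real.logb 2 (i:ℝ) < (p2dL i x : ℝ)) :
    Tendsto (fun n : ℕ => (p2dL n x : ℝ) / Real.logb 2 n) atTop (nhds 1) := by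
  rw [tendsto_order]
  constructor
  · intro a ha
    obtain ⟨K, hK⟩ := exists_nat_one_div_lt (by linarith : (0:ℝ) < 1 - a)
    filter_upwards [hL K, eventually_ge_atTop 2] with i hi h2i
    have hi1 : (1:ℝ) < (i:ℝ) := by exact_mod_cast by omega
    have hlb : 0 < Real.logb 2 (i:ℝ) := Real.logb_pos (by norm_num) hi1
    rw [lt_div_iff₀ hlb]
    have : a ≤ 1 - 1/((K:ℝ)+1) := by push_cast at hK ⊢; linarith
    nlinarith
  · intro a ha
    obtain ⟨K, hK⟩ := exists_nat_one_div_lt (by linarith : (0:ℝ) < (a-1)/2)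
    set c : ℝ := 1 + 1/((K:ℝ)+1) with hc
    have hc0 : 0 ≤ c := by positivity
    have hca : c < a := by push_cast at hK; rw [hc]; linarith
    obtain ⟨N, hN⟩ := eventually_atTop.1 (hU K)
    set M : ℕ := max N 1 with hM
    set Cx : ℕ := p2dL M x with hCx
    have hmono : ∀ i, M ≤ i → p2dL i x ≤ max Cx ⌊c * Real.logb 2 (i:ℝ)⌋₊ := by
      intro i hi
      apply Finset.sup_le
      intro b hb
      rw [Finset.mem_Icc] at hb
      by_cases hbM : b ≤ M
      · exact le_max_of_le_left (Finset.le_sup (f := fun i => p2dDigit i x)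
          (Finset.mem_Icc.2 ⟨hb.1, hbM⟩))
      · push_neg at hbM
        have hbN : N ≤ b := by omega
        refine le_max_of_le_right (le_trans (hN b hbN) (Nat.floor_mono ?_))
        apply mul_le_mul_of_nonneg_left _ hc0
        have hb0 : (0:ℝ) < (b:ℝ) := by exact_mod_cast by omega
        exact (Real.logb_le_logb (by norm_num) hb0 (by exact_mod_cast by omega : (0:ℝ) < (i:ℝ))).2
          (by exact_mod_cast hb.2)
    have h0 : Tendsto (fun i : ℕ => (Cx:ℝ) / Real.logb 2 (i:ℝ)) atTop (nhds 0) :=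
      tendsto_const_nhds.div_atTop logb_tendsto
    have hev : ∀ᶠ i : ℕ in atTop, (Cx:ℝ) / Real.logb 2 (i:ℝ) < a :=
      h0.eventually_lt_const (by linarith)
    filter_upwards [hev, eventually_ge_atTop (max M 2)] with i hCxi hi
    have hiM : M ≤ i := le_trans (le_max_left _ _) hi
    have hi2 : 2 ≤ i := le_trans (le_max_right _ _) hi
    have hi1 : (1:ℝ) < (i:ℝ) := by exact_mod_cast by omega
    have hlb : 0 < Real.logb 2 (i:ℝ) := Real.logb_pos (by norm_num) hi1
    rw [div_lt_iff₀ hlb]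
    have h1 : (p2dL i x : ℝ) ≤ max (Cx:ℝ) ((⌊c * Real.logb 2 (i:ℝ)⌋₊ : ℕ) : ℝ) := by
      have := hmono i hiM
      have hcast : ((p2dL i x : ℕ) : ℝ) ≤ ((max Cx ⌊c * Real.logb 2 (i:ℝ)⌋₊ : ℕ) : ℝ) :=
        Nat.cast_le.2 this
      rw [Nat.cast_max] at hcast
      exact hcast
    have h2 : ((⌊c * Real.logb 2 (i:ℝ)⌋₊ : ℕ) : ℝ) ≤ c * Real.logb 2 (i:ℝ) :=
      Nat.floor_le (by positivity)
    have h4 : (Cx:ℝ) < a * Real.logb 2 (i:ℝ) := by rwa [div_lt_iff₀ hlb] at hCxi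
    have h3 : c * Real.logb 2 (i:ℝ) < a * Real.logb 2 (i:ℝ) := by nlinarith
    calc (p2dL i x : ℝ) ≤ _ := h1
      _ < a * Real.logb 2 (i:ℝ) := max_lt h4 (lt_of_le_of_lt h2 h3)

/-- a.e. growth rate of maximal digits. -/
theorem p2d_Ln_ae :
    ∀ᵐ x ∂(volume.restrict (Set.Ioc (0:ℝ) 1)),
      Tendsto (fun n : ℕ => (p2dL n x : ℝ) / Real.logb 2 n) atTop (nhds 1) := by
  set μ := volume.restrict (Set.Ioc (0:ℝ) 1) with hμ
  have haemem : ∀ᵐ x ∂μ, x ∈ Set.Ioc (0:ℝ) 1 := ae_restrict_mem measurableSet_Ioc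
  have haeU : ∀ᵐ x ∂μ, ∀ K : ℕ, ∀ᶠ n : ℕ in atTop,
      x ∉ {y | y ∈ Set.Ioc (0:ℝ) 1 ∧
        ⌊(1+1/((K:ℝ)+1)) * Real.logb 2 ((n:ℝ)+2)⌋₊ + 1 ≤ p2dD1 (p2dT^[n+1] y)} := by
    rw [ae_all_iff]
    intro K
    apply ae_eventually_notMem
    apply tsum_ne_top_of_le (g := fun n : ℕ => 2 * ((n:ℝ)+2)^(-(1+1/((K:ℝ)+1))))
      (fun n => by positivity)
    · apply summable_shift
      have : (0:ℝ) < 1/((K:ℝ)+1) := by positivity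
      linarith
    · intro n
      exact le_trans (Measure.restrict_apply_le _ _) (volU_le K n)
  have haeV : ∀ᵐ x ∂μ, ∀ K : ℕ, ∀ᶠ n : ℕ in atTop,
      x ∉ p2dEset ⌊(1-1/((K:ℝ)+1)) * Real.logb 2 ((n:ℝ)+2)⌋₊ (n+2) := by
    rw [ae_all_iff]
    intro K
    apply ae_eventually_notMem
    apply tsum_ne_top_of_le
      (g := fun n : ℕ => (Nat.factorial (2*(K+1)) : ℝ) * ((n:ℝ)+2)^(-(2:ℝ)))
      (fun n => by positivity)
    · apply summable_shift; norm_num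
    · intro n
      exact le_trans (Measure.restrict_apply_le _ _) (volV_le K n)
  filter_upwards [haemem, haeU, haeV] with x hx hxU hxV
  apply main_ptwise x
  · intro K
    obtain ⟨N, hN⟩ := eventually_atTop.1 (hxU K)
    refine eventually_atTop.2 ⟨N+2, fun i hi => ?_⟩
    have hi2 : 2 ≤ i := by omega
    have h := hN (i-2) (by omega)
    simp only [Set.mem_setOf_eq, not_and, not_le] at h
    have h2 := h hx
    have e1 : (i-2)+1 = i-1 := by omega
    have e2 : ((i-2:ℕ):ℝ)+2 = (i:ℝ) := by
      rw [Nat.cast_sub hi2]; ring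
    rw [e1, e2] at h2
    show p2dD1 (p2dT^[i-1] x) ≤ ⌊(1+1/((K:ℝ)+1)) * Real.logb 2 (i:ℝ)⌋₊
    omega
  · intro K
    obtain ⟨N, hN⟩ := eventually_atTop.1 (hxV K)
    refine eventually_atTop.2 ⟨N+2, fun i hi => ?_⟩
    have hi2 : 2 ≤ i := by omega
    have h := hN (i-2) (by omega)
    have e0 : (i-2)+2 = i := by omega
    have e2 : ((i-2:ℕ):ℝ)+2 = (i:ℝ) := by
      rw [Nat.cast_sub hi2]; ring
    rw [e0, e2] at h
    set b : ℕ := ⌊(1-1/((K:ℝ)+1)) * Real.logb 2 (i:ℝ)⌋₊ with hb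
    have : ¬ (x ∈ Set.Ioc (0:ℝ) 1 ∧ ∀ j < i, p2dD1 (p2dT^[j] x) ≤ b) := h
    push_neg at this
    obtain ⟨j, hj, hjd⟩ := this hx
    have hLge : b + 1 ≤ p2dL i x := by
      have hmem : j + 1 ∈ Finset.Icc 1 i := Finset.mem_Icc.2 ⟨by omega, by omega⟩
      have hdig : p2dDigit (j+1) x = p2dD1 (p2dT^[j] x) := by
        unfold p2dDigit; congr 1
      have hsup : p2dD1 (p2dT^[j] x) ≤ p2dL i x := by
        have := Finset.le_sup (f := fun k => p2dDigit k x) hmem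
        simpa [p2dL, hdig] using this
      omega
    have hflt : (1-1/((K:ℝ)+1)) * Real.logb 2 (i:ℝ) < (b:ℝ) + 1 :=
      Nat.lt_floor_add_one _
    calc (1-1/((K:ℝ)+1)) * Real.logb 2 (i:ℝ) < (b:ℝ) + 1 := hflt
      _ ≤ (p2dL i x : ℝ) := by exact_mod_cast hLge
end
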